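/- Let p be a prime, e ≥ 1, q = pᵉ, let F be the finite field with q elements, and let k be an algebraically closed field equipped with an F-algebra structure. Let A₀ and B₀ be finitely generated F-algebras, let φ₁⁰, φ₂⁰ : A₀ → B₀ be F-algebra homomorphisms, and set A := A₀ ⊗_F k, B := B₀ ⊗_F k, φᵢ := φᵢ⁰ ⊗ id_k : A → B. Let σ : A → A be the ring endomorphism determined by a ⊗ λ ↦ a^q ⊗ λ (the geometric q-Frobenius). Assume: (i) every fiber of the map Spec B → Spec A, p ↦ φ₂⁻¹(p), is a finite set (c₂ is quasi-finite); (ii) r is a positive integer such that for every maximal ideal m ⊆ A one has (√(B·φ₂(m)))^r ⊆ B·φ₂(m) (i.e. ram(c₂) ≤ r). Then for every n ≥ 1 with qⁿ > r, the set V(Jₙ) ⊆ Spec B is finite, where Jₙ ⊆ B is the ideal generated by all elements φ₁(σⁿ(a)) − φ₂(a) for a ∈ A. -/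

import Mathlib

open TensorProduct



/-- In a Jacobson ring, a prime with only finitely many primes above it is maximal. -/
lemma aux_jacobson_max {B : Type*} [CommRing B] [IsJacobsonRing B] (p : Ideal B)
    (hp : p.IsPrime) (hfin : {q : Ideal B | q.IsPrime ∧ p ≤ q}.Finite) : p.IsMaximal := by
  by_contra hnm
  have hMsub : {J : Ideal B | p ≤ J ∧ J.IsMaximal} ⊆ {q : Ideal B | q.IsPrime ∧ p ≤ q} :=
    fun J hJ => ⟨hJ.2.isPrime, hJ.1⟩
  have hMfin : {J : Ideal B | p ≤ J ∧ J.IsMaximal}.Finite := hfin.subset hMsub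
  classical
  set Mf := hMfin.toFinset with hMf
  set f : Ideal B → B := fun J =>
    if h : ∃ x, x ∈ J ∧ x ∉ p then h.choose else 1 with hfdef
  have hfspec : ∀ J ∈ Mf, f J ∈ J ∧ f J ∉ p := by
    intro J hJ
    rw [hMf, Set.Finite.mem_toFinset] at hJ
    have hex : ∃ x, x ∈ J ∧ x ∉ p := by
      have hne : p ≠ J := by
        rintro rfl; exact hnm hJ.2
      have hlt : p < J := lt_of_le_of_ne hJ.1 hne
      obtain ⟨x, hx1, hx2⟩ := SetLike.exists_of_lt hlt
      exact ⟨x, hx1, hx2⟩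
    simp only [hfdef, dif_pos hex]
    exact hex.choose_spec
  have hjac : p.jacobson = p := by
    exact (isJacobsonRing_iff.mp ‹IsJacobsonRing B›) p hp.isRadical
  have hprod : (∏ J ∈ Mf, f J) ∈ p := by
    rw [← hjac, Ideal.jacobson, Ideal.mem_sInf]
    intro J hJ
    have hJM : J ∈ Mf := by rw [hMf, Set.Finite.mem_toFinset]; exact hJ
    obtain ⟨c, hc⟩ := Finset.dvd_prod_of_mem f hJM
    rw [hc]
    exact Ideal.mul_mem_right _ _ (hfspec J hJM).1
  rw [Ideal.IsPrime.prod_mem_iff] at hprod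
  obtain ⟨J, hJM, hJp⟩ := hprod
  exact (hfspec J hJM).2 hJp

/-- Krull intersection style lemma: in a Noetherian domain, if `c * y ^ k ∈ N ^ k` for all `k`
with `N` prime and `y ∉ N`, then `c = 0`. -/
lemma aux_krull {D : Type*} [CommRing D] [IsDomain D] [IsNoetherianRing D] (N : Ideal D)
    (hN : N.IsPrime) (y c : D) (hy : y ∉ N) (h : ∀ kk : ℕ, c * y ^ kk ∈ N ^ kk) : c = 0 := by
  haveI := hN
  set L := Localization.AtPrime N
  haveI : IsNoetherianRing L := by
    exact IsLocalization.isNoetherianRing N.primeCompl L ‹IsNoetherianRing D›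
  haveI : IsDomain L := IsLocalization.isDomain_localization N.primeCompl_le_nonZeroDivisors
  set NL := Ideal.map (algebraMap D L) N with hNL
  have hNLne : NL ≠ ⊤ := by
    rw [hNL, Localization.AtPrime.map_eq_maximalIdeal]
    exact (IsLocalRing.maximalIdeal.isMaximal L).ne_top
  have hmem : algebraMap D L c ∈ ⨅ kk : ℕ, NL ^ kk := by
    rw [Ideal.mem_iInf]
    intro kk
    have h1 : algebraMap D L (c * y ^ kk) ∈ NL ^ kk := by
      rw [hNL, ← Ideal.map_pow]
      exact Ideal.mem_map_of_mem _ (h kk)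
    have hu : IsUnit (algebraMap D L y) := IsLocalization.map_units L (⟨y, hy⟩ : N.primeCompl)
    rw [map_mul, map_pow] at h1
    exact (Ideal.mul_unit_mem_iff_mem _ (hu.pow kk)).mp h1
  rw [Ideal.iInf_pow_eq_bot_of_isDomain (I := NL) hNLne] at hmem
  have hinj : Function.Injective (algebraMap D L) :=
    IsLocalization.injective L N.primeCompl_le_nonZeroDivisors
  apply hinj
  rw [map_zero]
  exact hmem

/-- Over an algebraically closed field, the contraction of a maximal ideal along a map of
finite type algebras is maximal. -/
lemma aux_comap_max {k : Type*} [Field k] [IsAlgClosed k] {A B : Type*} [CommRing A]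
    [CommRing B] [Algebra k A] [Algebra k B] (hft : Algebra.FiniteType k B)
    (f : A →ₐ[k] B) (m : Ideal B) (hm : m.IsMaximal) :
    (Ideal.comap (f : A →+* B) m).IsMaximal := by
  haveI := hm
  haveI : Algebra.FiniteType k (B ⧸ m) :=
    by haveI := hft; exact Algebra.FiniteType.of_surjective (Ideal.Quotient.mkₐ k m) (Ideal.Quotient.mkₐ_surjective k m)
  letI : Field (B ⧸ m) := Ideal.Quotient.field m
  haveI : Module.Finite k (B ⧸ m) := finite_of_finite_type_of_isJacobsonRing k (B ⧸ m)
  haveI : Algebra.IsIntegral k (B ⧸ m) := Algebra.IsIntegral.of_finite k (B ⧸ m)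
  have hsurj : Function.Surjective (algebraMap k (B ⧸ m)) :=
    IsAlgClosed.algebraMap_bijective_of_isIntegral.2
  set 𝔫 := Ideal.comap (f : A →+* B) m with h𝔫
  haveI h𝔫p : 𝔫.IsPrime := Ideal.IsPrime.comap _
  set g : (A ⧸ 𝔫) →+* (B ⧸ m) := Ideal.quotientMap m (f : A →+* B) le_rfl with hg
  have hginj : Function.Injective g := Ideal.quotientMap_injective
  have hgalg : ∀ c : k, g (algebraMap k (A ⧸ 𝔫) c) = algebraMap k (B ⧸ m) c := by
    intro c
    have h1 : algebraMap k (A ⧸ 𝔫) c = Ideal.Quotient.mk 𝔫 (algebraMap k A c) := rfl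
    have h2 : algebraMap k (B ⧸ m) c = Ideal.Quotient.mk m (algebraMap k B c) := rfl
    rw [h1, h2, hg, Ideal.quotientMap_mk]
    congr 1
    exact f.commutes c
  apply Ideal.Quotient.maximal_of_isField
  haveI : Nontrivial (A ⧸ 𝔫) := Ideal.Quotient.nontrivial_iff.mpr h𝔫p.ne_top
  refine ⟨exists_pair_ne _, mul_comm, ?_⟩
  intro a ha
  obtain ⟨c, hc⟩ := hsurj (g a)
  have hc0 : c ≠ 0 := by
    rintro rfl
    rw [map_zero] at hc
    exact ha (hginj (by rw [← hc, map_zero]))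
  refine ⟨algebraMap k (A ⧸ 𝔫) c⁻¹, hginj ?_⟩
  rw [map_mul, hgalg, map_one, ← hc, ← map_mul, mul_inv_cancel₀ hc0, map_one]


lemma aux_frob {p e : ℕ} (hp : p.Prime) (he : 1 ≤ e)
    (F : Type*) [Field F] [Fintype F] (hcard : Fintype.card F = p ^ e)
    (k : Type*) [Field k] [IsAlgClosed k] [Algebra F k]
    (A₀ : Type*) [CommRing A₀] [Algebra F A₀]
    [Nontrivial (A₀ ⊗[F] k)]
    (σ : (A₀ ⊗[F] k) →+* (A₀ ⊗[F] k))
    (hσ : ∀ (a : A₀) (lam : k), σ (a ⊗ₜ[F] lam) = (a ^ (p ^ e)) ⊗ₜ[F] lam) :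
    ∀ (n : ℕ) (a : A₀ ⊗[F] k), ∃ w : A₀ ⊗[F] k, (⇑σ)^[n] a = w ^ (p ^ e) ^ n := by
  set q := p ^ e with hqdef
  have hq0 : q ≠ 0 := pow_ne_zero e hp.ne_zero
  -- characteristic of F is p
  haveI hF : CharP F p := by
    obtain ⟨m, hpr, hcard'⟩ := FiniteField.card F (ringChar F)
    have hdvd : p ∣ (ringChar F) ^ (m : ℕ) := by
      rw [← hcard', hcard]
      exact dvd_pow_self p (by omega)
    have h1 : p = ringChar F :=
      (Nat.prime_dvd_prime_iff_eq hp hpr).mp (hp.dvd_of_dvd_pow hdvd)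
    rw [h1]; exact ringChar.charP F
  haveI hk : CharP k p := charP_of_injective_algebraMap (algebraMap F k).injective p
  haveI : ExpChar k p := .prime hp
  haveI hA : CharP (A₀ ⊗[F] k) p :=
    charP_of_injective_ringHom (algebraMap F (A₀ ⊗[F] k)).injective p
  haveI : ExpChar (A₀ ⊗[F] k) p := .prime hp
  -- the Frobenius on k as an F-algebra automorphism
  have hfr_add : ∀ x y : k, (x + y) ^ q = x ^ q + y ^ q := fun x y => by
    rw [hqdef]; exact add_pow_expChar_pow x y p e
  set fr : k →ₐ[F] k :=
    { toFun := fun x => x ^ q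
      map_one' := one_pow q
      map_mul' := fun x y => mul_pow x y q
      map_zero' := zero_pow hq0
      map_add' := hfr_add
      commutes' := fun c => by
        show (algebraMap F k c) ^ q = algebraMap F k c
        rw [← map_pow]
        congr 1
        rw [← hcard]
        exact FiniteField.pow_card c } with hfrdef
  have hfr_apply : ∀ x : k, fr x = x ^ q := fun x => rfl
  have hfr_bij : Function.Bijective fr := by
    constructor
    · exact RingHom.injective (fr : k →+* k)
    · intro y
      obtain ⟨z, hz⟩ := IsAlgClosed.exists_pow_nat_eq y (n := q) (Nat.pos_of_ne_zero hq0)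
      exact ⟨z, hz⟩
  set frE : k ≃ₐ[F] k := AlgEquiv.ofBijective fr hfr_bij with hfrE
  set τ : (A₀ ⊗[F] k) ≃ₐ[F] (A₀ ⊗[F] k) :=
    Algebra.TensorProduct.congr AlgEquiv.refl frE with hτ
  have hτ_tmul : ∀ (a : A₀) (lam : k), τ (a ⊗ₜ[F] lam) = a ⊗ₜ[F] (lam ^ q) := by
    intro a lam
    simp [hτ, Algebra.TensorProduct.congr_apply, Algebra.TensorProduct.map_tmul, hfrE,
      hfr_apply]
  have hστ : ∀ x : A₀ ⊗[F] k, σ (τ x) = x ^ q := by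
    intro x
    induction x using TensorProduct.induction_on with
    | zero => rw [map_zero, map_zero, zero_pow hq0]
    | tmul a lam => rw [hτ_tmul, hσ, Algebra.TensorProduct.tmul_pow]
    | add x y hx hy =>
      rw [map_add, map_add, hx, hy, hqdef, add_pow_expChar_pow x y p e]
  have hiter : ∀ (m : ℕ) (x : A₀ ⊗[F] k), (⇑σ)^[m] ((⇑τ)^[m] x) = x ^ q ^ m := by
    intro m
    induction m with
    | zero => intro x; simp
    | succ m ih =>
      intro x
      rw [Function.iterate_succ_apply (⇑τ), Function.iterate_succ_apply' (⇑σ), ih (τ x),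
        ← map_pow, hστ, ← pow_mul, pow_succ]
  intro n a
  refine ⟨(⇑τ.symm)^[n] a, ?_⟩
  have hri : Function.RightInverse ⇑τ.symm ⇑τ := τ.apply_symm_apply
  have := hiter n ((⇑τ.symm)^[n] a)
  rwa [hri.iterate n a] at this


set_option maxHeartbeats 2000000 in
set_option synthInstance.maxHeartbeats 400000 in
/-- (Affine case of the geometric part of Deligne's conjecture.)
For an affine correspondence `φ₁, φ₂ : A → B` defined over `F = F_q` (base-changed to an
algebraically closed field `k`), with `φ₂` quasi-finite of ramification degree `≤ r`,
twisting `φ₁` by the `n`-th power of the geometric `q`-Frobenius `σ` with `qⁿ > r` makes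
the fixed-point locus `V(Jₙ)` finite. -/
theorem stmt10 (p e q : ℕ) (hp : p.Prime) (he : 1 ≤ e) (hq : q = p ^ e)
    (F : Type*) [Field F] [Fintype F] (hcard : Fintype.card F = q)
    (k : Type*) [Field k] [IsAlgClosed k] [Algebra F k]
    (A₀ B₀ : Type*) [CommRing A₀] [CommRing B₀] [Algebra F A₀] [Algebra F B₀]
    (hA₀ : Algebra.FiniteType F A₀) (hB₀ : Algebra.FiniteType F B₀)
    (ψ₁ ψ₂ : A₀ →ₐ[F] B₀)
    (φ₁ φ₂ : (A₀ ⊗[F] k) →+* (B₀ ⊗[F] k))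
    (hφ₁ : φ₁ = (Algebra.TensorProduct.map ψ₁ (AlgHom.id F k)).toRingHom)
    (hφ₂ : φ₂ = (Algebra.TensorProduct.map ψ₂ (AlgHom.id F k)).toRingHom)
    (σ : (A₀ ⊗[F] k) →+* (A₀ ⊗[F] k))
    (hσ : ∀ (a : A₀) (lam : k), σ (a ⊗ₜ[F] lam) = (a ^ q) ⊗ₜ[F] lam)
    (hqf : ∀ P : PrimeSpectrum (A₀ ⊗[F] k),
      (PrimeSpectrum.comap φ₂ ⁻¹' {P}).Finite)
    (r : ℕ) (hr : 0 < r)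
    (hram : ∀ m : Ideal (A₀ ⊗[F] k), m.IsMaximal →
      (Ideal.map φ₂ m).radical ^ r ≤ Ideal.map φ₂ m) :
    ∀ n : ℕ, 1 ≤ n → r < q ^ n →
      (PrimeSpectrum.zeroLocus
        ((Ideal.span {b : B₀ ⊗[F] k | ∃ a : A₀ ⊗[F] k,
            b = φ₁ ((⇑σ)^[n] a) - φ₂ a} : Ideal (B₀ ⊗[F] k)) : Set (B₀ ⊗[F] k))).Finite := by
  
  subst hq
  intro n hn hqn
  by_cases htriv : Subsingleton (B₀ ⊗[F] k)
  · exact Set.toFinite _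
  haveI hBnt : Nontrivial (B₀ ⊗[F] k) := not_subsingleton_iff_nontrivial.mp htriv
  haveI hAnt : Nontrivial (A₀ ⊗[F] k) := by
    refine ⟨⟨0, 1, fun h01 => ?_⟩⟩
    exact zero_ne_one (α := B₀ ⊗[F] k) (by rw [← map_zero φ₂, h01, map_one])
  classical
  letI : Algebra k (A₀ ⊗[F] k) := Algebra.TensorProduct.rightAlgebra
  letI : Algebra k (B₀ ⊗[F] k) := Algebra.TensorProduct.rightAlgebra
  haveI : Algebra.FiniteType F B₀ := hB₀
  have eB : (k ⊗[F] B₀) ≃ₐ[k] (B₀ ⊗[F] k) := by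
    refine AlgEquiv.ofRingEquiv (f := (Algebra.TensorProduct.comm F k B₀).toRingEquiv) ?_
    intro c
    show (Algebra.TensorProduct.comm F k B₀) (algebraMap k (k ⊗[F] B₀) c)
        = algebraMap k (B₀ ⊗[F] k) c
    rw [Algebra.TensorProduct.algebraMap_apply]
    show (Algebra.TensorProduct.comm F k B₀) ((algebraMap k k c) ⊗ₜ[F] (1 : B₀))
        = (1 : B₀) ⊗ₜ[F] c
    rw [Algebra.TensorProduct.comm_tmul]
    simp
  haveI hftB : Algebra.FiniteType k (B₀ ⊗[F] k) :=
    Algebra.FiniteType.of_surjective eB.toAlgHom eB.surjective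
  haveI : IsNoetherianRing (B₀ ⊗[F] k) := Algebra.FiniteType.isNoetherianRing k _
  haveI : IsJacobsonRing (B₀ ⊗[F] k) := isJacobsonRing_of_finiteType (A := k)
  set φ₂k : (A₀ ⊗[F] k) →ₐ[k] (B₀ ⊗[F] k) :=
    { toRingHom := φ₂
      commutes' := by
        intro c
        show φ₂ ((1 : A₀) ⊗ₜ[F] c) = (1 : B₀) ⊗ₜ[F] c
        rw [hφ₂]
        simp } with hφ₂k
  set Jn : Ideal (B₀ ⊗[F] k) := Ideal.span {b : B₀ ⊗[F] k | ∃ a : A₀ ⊗[F] k,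
      b = φ₁ ((⇑σ)^[n] a) - φ₂ a} with hJn
  -- main claim: every prime over Jn is maximal
  have hprime_max : ∀ P : Ideal (B₀ ⊗[F] k), P.IsPrime → Jn ≤ P → P.IsMaximal := by
    intro P hP hJnP
    obtain ⟨m, hm, hPm⟩ := Ideal.exists_le_maximal P hP.ne_top
    suffices hmP : m ≤ P by
      have heq : P = m := le_antisymm hPm hmP
      rw [heq]; exact hm
    set 𝔫 := Ideal.comap φ₂ m with h𝔫
    have h𝔫max : 𝔫.IsMaximal := aux_comap_max hftB φ₂k m hm
    haveI h𝔫p : 𝔫.IsPrime := h𝔫max.isPrime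
    set I := Ideal.map φ₂ 𝔫 with hI
    -- all primes in the fiber over 𝔫 are maximal
    have hfib : ∀ pp : Ideal (B₀ ⊗[F] k), pp.IsPrime → Ideal.comap φ₂ pp = 𝔫 →
        pp.IsMaximal := by
      intro pp hpp hcomap
      apply aux_jacobson_max pp hpp
      have hsub : {qq : Ideal (B₀ ⊗[F] k) | qq.IsPrime ∧ pp ≤ qq} ⊆
          PrimeSpectrum.asIdeal '' (PrimeSpectrum.comap φ₂ ⁻¹' {⟨𝔫, h𝔫p⟩}) := by
        rintro qq ⟨hq1, hq2⟩
        refine ⟨⟨qq, hq1⟩, ?_, rfl⟩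
        simp only [Set.mem_preimage, Set.mem_singleton_iff]
        refine PrimeSpectrum.ext ?_
        show Ideal.comap φ₂ qq = 𝔫
        have h1 : 𝔫 ≤ Ideal.comap φ₂ qq := by
          rw [← hcomap]; exact Ideal.comap_mono hq2
        exact (h𝔫max.eq_of_le (Ideal.comap_ne_top φ₂ hq1.ne_top) h1).symm
      exact ((hqf ⟨𝔫, h𝔫p⟩).image _).subset hsub
    -- primes over I
    have hT : ∀ J : Ideal (B₀ ⊗[F] k), J.IsPrime → I ≤ J →
        (Ideal.comap φ₂ J = 𝔫 ∧ J.IsMaximal) := by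
      intro J hJ hIJ
      have h1 : 𝔫 ≤ Ideal.comap φ₂ J := fun a ha => hIJ (Ideal.mem_map_of_mem φ₂ ha)
      have h2 : Ideal.comap φ₂ J = 𝔫 :=
        (h𝔫max.eq_of_le (Ideal.comap_ne_top φ₂ hJ.ne_top) h1).symm
      exact ⟨h2, hfib J hJ h2⟩
    have hTfin : {J : Ideal (B₀ ⊗[F] k) | J.IsPrime ∧ I ≤ J}.Finite := by
      have hsub : {J : Ideal (B₀ ⊗[F] k) | J.IsPrime ∧ I ≤ J} ⊆
          PrimeSpectrum.asIdeal '' (PrimeSpectrum.comap φ₂ ⁻¹' {⟨𝔫, h𝔫p⟩}) := by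
        rintro J ⟨hJ1, hJ2⟩
        refine ⟨⟨J, hJ1⟩, ?_, rfl⟩
        simp only [Set.mem_preimage, Set.mem_singleton_iff]
        exact PrimeSpectrum.ext ((hT J hJ1 hJ2).1)
      exact ((hqf ⟨𝔫, h𝔫p⟩).image _).subset hsub
    set Tf := hTfin.toFinset with hTfdef
    have hmT : m ∈ Tf := by
      rw [hTfdef, Set.Finite.mem_toFinset]
      exact ⟨hm.isPrime, Ideal.map_comap_le⟩
    set g : Ideal (B₀ ⊗[F] k) → (B₀ ⊗[F] k) := fun J =>
      if h : ∃ x, x ∈ J ∧ x ∉ m then h.choose else 1 with hgdef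
    have hgspec : ∀ J ∈ Tf.erase m, g J ∈ J ∧ g J ∉ m := by
      intro J hJ
      rw [Finset.mem_erase] at hJ
      obtain ⟨hne, hJT⟩ := hJ
      rw [hTfdef, Set.Finite.mem_toFinset] at hJT
      have hJmax : J.IsMaximal := (hT J hJT.1 hJT.2).2
      have hnle : ¬ J ≤ m := by
        intro hle
        exact hne (hJmax.eq_of_le hm.ne_top hle)
      obtain ⟨x, hx1, hx2⟩ := SetLike.not_le_iff_exists.mp hnle
      have hex : ∃ x, x ∈ J ∧ x ∉ m := ⟨x, hx1, hx2⟩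
      simp only [hgdef, dif_pos hex]
      exact hex.choose_spec
    set y := ∏ J ∈ Tf.erase m, g J with hydef
    haveI := hm.isPrime
    have hym : y ∉ m := by
      intro hy
      rw [hydef, Ideal.IsPrime.prod_mem_iff] at hy
      obtain ⟨J, hJ, hgJ⟩ := hy
      exact (hgspec J hJ).2 hgJ
    have hyJ : ∀ J ∈ Tf.erase m, y ∈ J := by
      intro J hJ
      obtain ⟨c, hc⟩ := Finset.dvd_prod_of_mem g hJ
      rw [hydef, hc]
      exact Ideal.mul_mem_right _ _ (hgspec J hJ).1
    have hrad : ∀ z ∈ m, z * y ∈ I.radical := by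
      intro z hz
      rw [Ideal.radical_eq_sInf, Ideal.mem_sInf]
      rintro J ⟨hIJ, hJp⟩
      by_cases hJm : J = m
      · subst hJm
        exact Ideal.mul_mem_right _ _ hz
      · have hJT : J ∈ Tf.erase m := by
          rw [Finset.mem_erase, hTfdef, Set.Finite.mem_toFinset]
          exact ⟨hJm, hJp, hIJ⟩
        exact Ideal.mul_mem_left _ _ (hyJ J hJT)
    -- I ≤ m ^ q^n ⊔ Jn
    have hIle : I ≤ m ^ ((p ^ e) ^ n) ⊔ Jn := by
      rw [hI, Ideal.map_le_iff_le_comap]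
      intro a ha
      obtain ⟨w, hw⟩ := aux_frob hp he F hcard k A₀ σ hσ n a
      have hd : φ₁ ((⇑σ)^[n] a) - φ₂ a ∈ Jn := Ideal.subset_span ⟨a, rfl⟩
      have hφ₂a : φ₂ a ∈ m := ha
      have hφ₁σ : φ₁ ((⇑σ)^[n] a) ∈ m := by
        have h1 : φ₁ ((⇑σ)^[n] a) - φ₂ a ∈ m := hPm (hJnP hd)
        have := m.add_mem h1 hφ₂a
        rwa [sub_add_cancel] at this
      have hφ₁w : φ₁ w ∈ m := by
        apply hm.isPrime.mem_of_pow_mem ((p ^ e) ^ n)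
        rw [← map_pow, ← hw]
        exact hφ₁σ
      show a ∈ Ideal.comap φ₂ (m ^ ((p ^ e) ^ n) ⊔ Jn)
      rw [Ideal.mem_comap]
      have heq2 : φ₂ a = (φ₁ w) ^ ((p ^ e) ^ n) - (φ₁ ((⇑σ)^[n] a) - φ₂ a) := by
        rw [← map_pow, ← hw]; ring
      rw [heq2]
      exact Submodule.sub_mem _ (Ideal.mem_sup_left (Ideal.pow_mem_pow hφ₁w _))
        (Ideal.mem_sup_right hd)
    -- key ideal inequality
    have hkey : m ^ r * (Ideal.span {y}) ^ r ≤ m ^ ((p ^ e) ^ n) ⊔ Jn := by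
      rw [← mul_pow]
      refine le_trans (Ideal.pow_right_mono ?_ r) (le_trans (hram 𝔫 h𝔫max) hIle)
      rw [Ideal.mul_le]
      intro z hz b hb
      rw [Ideal.mem_span_singleton] at hb
      obtain ⟨t, rfl⟩ := hb
      have h1 := hrad z hz
      rw [← mul_assoc]
      exact Ideal.mul_mem_right _ _ h1
    -- pass to the quotient by P
    haveI := hP
    set mkq : (B₀ ⊗[F] k) →+* (B₀ ⊗[F] k) ⧸ P := Ideal.Quotient.mk P with hmkq
    set N := Ideal.map mkq m with hN
    have hkerP : RingHom.ker mkq = P := Ideal.mk_ker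
    have hNprime : N.IsPrime :=
      Ideal.map_isPrime_of_surjective Ideal.Quotient.mk_surjective
        (le_trans (le_of_eq hkerP) hPm)
    have hcomapN : Ideal.comap mkq N = m := by
      rw [hN, Ideal.comap_map_of_surjective mkq Ideal.Quotient.mk_surjective,
        ← RingHom.ker_eq_comap_bot, hkerP]
      exact sup_eq_left.mpr hPm
    have hyN : mkq y ∉ N := by
      intro h
      exact hym (by rw [← hcomapN]; exact h)
    have hmapJn : Ideal.map mkq Jn = ⊥ := by
      refine le_antisymm ?_ bot_le
      have := Ideal.map_mono (f := mkq) hJnP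
      rwa [Ideal.map_quotient_self] at this
    have hmapkey : N ^ r * (Ideal.span {mkq y}) ^ r ≤ N ^ ((p ^ e) ^ n) := by
      have h1 := Ideal.map_mono (f := mkq) hkey
      rw [Ideal.map_mul, Ideal.map_pow, Ideal.map_pow, Ideal.map_sup, Ideal.map_pow,
        hmapJn, sup_bot_eq, Ideal.map_span, Set.image_singleton] at h1
      exact h1
    have hquot : ∀ kk : ℕ, N ^ r * (Ideal.span {mkq y}) ^ (r * kk) ≤ N ^ (r + kk) := by
      intro kk
      induction kk with
      | zero => simp
      | succ kk ih =>
        have h1 : N ^ r * (Ideal.span {mkq y}) ^ (r * (kk + 1)) =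
            (N ^ r * (Ideal.span {mkq y}) ^ r) * (Ideal.span {mkq y}) ^ (r * kk) := by
          ring
        rw [h1]
        calc (N ^ r * (Ideal.span {mkq y}) ^ r) * (Ideal.span {mkq y}) ^ (r * kk)
            ≤ N ^ ((p ^ e) ^ n) * (Ideal.span {mkq y}) ^ (r * kk) :=
              Ideal.mul_mono_left hmapkey
          _ ≤ N ^ (r + 1) * (Ideal.span {mkq y}) ^ (r * kk) :=
              Ideal.mul_mono_left (Ideal.pow_le_pow_right hqn)
          _ = N * (N ^ r * (Ideal.span {mkq y}) ^ (r * kk)) := by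
              ring
          _ ≤ N * N ^ (r + kk) := Ideal.mul_mono_right ih
          _ = N ^ (r + (kk + 1)) := by
              ring
      -- end
    -- conclude m ≤ P
    intro x hx
    set c := (mkq x) ^ r with hc
    set Y := (mkq y) ^ r with hY
    have hck : ∀ kk : ℕ, c * Y ^ kk ∈ N ^ kk := by
      intro kk
      have h1 : (mkq x) ^ r ∈ N ^ r := Ideal.pow_mem_pow (Ideal.mem_map_of_mem mkq hx) r
      have h2 : (mkq y) ^ (r * kk) ∈ (Ideal.span {mkq y}) ^ (r * kk) :=
        Ideal.pow_mem_pow (Ideal.mem_span_singleton_self _) _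
      have h3 := hquot kk (Ideal.mul_mem_mul h1 h2)
      have h4 : N ^ (r + kk) ≤ N ^ kk := Ideal.pow_le_pow_right (by omega)
      have h5 : c * Y ^ kk = (mkq x) ^ r * (mkq y) ^ (r * kk) := by
        rw [hc, hY, ← pow_mul]
      rw [h5]
      exact h4 h3
    have hYN : Y ∉ N := by
      intro h
      exact hyN (hNprime.mem_of_pow_mem r h)
    have hc0 : c = 0 := aux_krull N hNprime Y c hYN hck
    have hx0 : mkq x = 0 := by
      have h : (mkq x) ^ r = 0 := hc0
      exact (pow_eq_zero_iff (n := r) (by omega)).mp h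
    exact Ideal.Quotient.eq_zero_iff_mem.mp hx0
  -- finish: the zero locus is contained in the (finite) set of minimal primes of Jn
  have hinj : Function.Injective (PrimeSpectrum.asIdeal (R := B₀ ⊗[F] k)) :=
    fun x y h => PrimeSpectrum.ext h
  have hminfin : Jn.minimalPrimes.Finite := by
    rw [Ideal.minimalPrimes_eq_comap]
    exact (minimalPrimes.finite_of_isNoetherianRing _).image _
  refine (hminfin.preimage hinj.injOn).subset ?_
  intro P hPz
  have hJle : Jn ≤ P.asIdeal := by
    rw [PrimeSpectrum.mem_zeroLocus] at hPz
    exact hPz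
  obtain ⟨p₀, hp₀, hle⟩ := Ideal.exists_minimalPrimes_le hJle
  have hp₀p : p₀.IsPrime := hp₀.1.1
  have hp₀max : p₀.IsMaximal := hprime_max p₀ hp₀p hp₀.1.2
  have heq : p₀ = P.asIdeal := hp₀max.eq_of_le P.isPrime.ne_top hle
  show P.asIdeal ∈ Jn.minimalPrimes
  rw [← heq]
  exact hp₀
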